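/- Let Γ(r) = ∑_{x ∈ T_n} exp((2πi/4)·tr(rx)) be the exponential sum over the Teichmüller set of GR(4,n). Then |Γ(r)| = 0 if r ∈ 2T_n with r ≠ 0, |Γ(r)| = 2ⁿ if r = 0, and |Γ(r)| = √(2ⁿ) otherwise. -/

import Mathlib

open scoped InnerProductSpace

/-- The Galois ring `GR(4,n) = ℤ₄[x]/⟨h(x)⟩`. -/
noncomputable abbrev GR (h : Polynomial (ZMod 4)) : Type :=
  Polynomial (ZMod 4) ⧸ Ideal.span {h}

/-- `ξ = x + ⟨h(x)⟩ ∈ GR(4,n)`. -/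
noncomputable def xi (h : Polynomial (ZMod 4)) : GR h :=
  Ideal.Quotient.mk (Ideal.span {h}) Polynomial.X

open Classical in
/-- The Teichmüller set `T_n = {0, 1, ξ, …, ξ^{2ⁿ−2}}`. -/
noncomputable def Teich (n : ℕ) (h : Polynomial (ZMod 4)) : Finset (GR h) :=
  insert 0 ((Finset.range (2 ^ n - 1)).image fun k => xi h ^ k)

/-- `h` is a monic basic primitive polynomial of degree `n`: it is monic of
degree `n`, its reduction mod 2 is a primitive polynomial over `ℤ₂`
(irreducible, with root `x` of multiplicative order `2ⁿ − 1`), and consequently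
`ξ` has multiplicative order `2ⁿ − 1` in `GR(4,n)`. -/
structure IsBasicPrimitive (n : ℕ) (h : Polynomial (ZMod 4)) : Prop where
  monic : h.Monic
  deg : h.natDegree = n
  irred : Irreducible (h.map (ZMod.castHom (by norm_num : (2:ℕ) ∣ 4) (ZMod 2)))
  prim : orderOf (Ideal.Quotient.mk
      (Ideal.span {h.map (ZMod.castHom (by norm_num : (2:ℕ) ∣ 4) (ZMod 2))})
      Polynomial.X) = 2 ^ n - 1
  xi_order : orderOf (xi h) = 2 ^ n - 1

/-- The exponential sum `Γ(r) = ∑_{x ∈ T_n} exp((2πi/4)·tr(rx))` over the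
Teichmüller set of `GR(4,n)`. -/
noncomputable def Gamma (n : ℕ) (h : Polynomial (ZMod 4)) (tr : GR h → ZMod 4)
    (r : GR h) : ℂ :=
  ∑ x ∈ Teich n h,
    Complex.exp (2 * Real.pi * Complex.I * ((tr (r * x)).val : ℂ) / 4)

namespace GP
open Polynomial

/-! ### The complex character `Ω` -/

noncomputable def Om (v : ZMod 4) : ℂ := Complex.I ^ v.val

lemma I_pow_mod (m : ℕ) : Complex.I ^ (m % 4) = Complex.I ^ m := by
  conv_rhs => rw [← Nat.div_add_mod m 4]
  rw [pow_add, pow_mul, Complex.I_pow_four, one_pow, one_mul]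

lemma Om_add (u v : ZMod 4) : Om (u + v) = Om u * Om v := by
  unfold Om
  rw [← pow_add, ZMod.val_add, I_pow_mod]

lemma Om_zero : Om 0 = 1 := by simp [Om, ZMod.val_zero]

lemma Om_pow_four (v : ZMod 4) : Om v ^ 4 = 1 := by
  rw [Om, ← pow_mul, mul_comm, pow_mul, Complex.I_pow_four, one_pow]

lemma Om_two_mul (v : ZMod 4) : Om (2 * v) = Om v ^ 2 := by
  rw [two_mul, Om_add, sq]

lemma Om_mul_conj (v : ZMod 4) : Om v * (starRingEnd ℂ) (Om v) = 1 := by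
  rw [Om, map_pow, Complex.conj_I, ← mul_pow]
  rw [show Complex.I * (-Complex.I) = 1 by
    rw [mul_neg, Complex.I_mul_I, neg_neg]]
  rw [one_pow]

noncomputable def eta (v : ZMod 4) : ℂ := Om v ^ 2

lemma eta_add (u v : ZMod 4) : eta (u + v) = eta u * eta v := by
  rw [eta, Om_add, mul_pow]; rfl

lemma eta_two_mul (v : ZMod 4) : eta (2 * v) = 1 := by
  rw [eta, Om_two_mul, ← pow_mul, show 2*2 = 4 from rfl, Om_pow_four]

lemma eta_zero : eta 0 = 1 := by rw [eta, Om_zero, one_pow]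

lemma eta_add_two_mul (u v : ZMod 4) : eta (u + 2 * v) = eta u := by
  rw [eta_add, eta_two_mul, mul_one]

lemma exp_eq_Om (v : ZMod 4) :
    Complex.exp (2 * Real.pi * Complex.I * ((v.val : ℕ) : ℂ) / 4) = Om v := by
  have h1 : (2 * Real.pi * Complex.I * ((v.val : ℕ) : ℂ) / 4)
      = (v.val : ℕ) * (((Real.pi / 2 : ℝ) : ℂ) * Complex.I) := by
    push_cast; ring
  rw [h1, Complex.exp_nat_mul, Complex.exp_mul_I, ← Complex.ofReal_cos,
    ← Complex.ofReal_sin, Real.cos_pi_div_two, Real.sin_pi_div_two]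
  simp [Om]

lemma eta_ne_one_imp (v : ZMod 4) (hv : 2 * v ≠ 0) : eta v ≠ 1 := by
  have h4 : v.val < 4 := ZMod.val_lt v
  have hv' : ((v.val : ℕ) : ZMod 4) = v := ZMod.natCast_rightInverse v
  rw [eta, Om, ← pow_mul]
  interval_cases hval : v.val
  · exact absurd (by rw [← hv']; decide : 2 * v = 0) hv
  · rw [show 1*2 = 2 from rfl, Complex.I_sq]; intro e; exact (by norm_num : (-1:ℂ) ≠ 1) e
  · exact absurd (by rw [← hv']; decide : 2 * v = 0) hv
  · rw [show 3*2 = 6 from rfl, show (6:ℕ) = 4 + 2 from rfl, pow_add,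
      Complex.I_pow_four, one_mul, Complex.I_sq]
    intro e; exact (by norm_num : (-1:ℂ) ≠ 1) e

lemma eta_eq_one_imp (v : ZMod 4) (hv : eta v = 1) : 2 * v = 0 := by
  by_contra hc; exact eta_ne_one_imp v hc hv

/-! ### character sum helper -/

lemma sum_char {G : Type*} [AddGroup G] [Fintype G] (ψ : G → ℂ)
    (hadd : ∀ a b : G, ψ (a + b) = ψ a * ψ b) (s₀ : G) (h1 : ψ s₀ ≠ 1) :
    ∑ s : G, ψ s = 0 := by
  have key : ψ s₀ * ∑ s : G, ψ s = ∑ s : G, ψ s := by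
    rw [Finset.mul_sum]
    exact Fintype.sum_equiv (Equiv.addLeft s₀) _ _ (fun s => (hadd s₀ s).symm)
  have : (ψ s₀ - 1) * ∑ s : G, ψ s = 0 := by rw [sub_mul, one_mul, key, sub_self]
  rcases mul_eq_zero.1 this with h' | h'
  · exact absurd (sub_eq_zero.1 h') h1
  · exact h'


/-! ### The residue field -/

def c24 : ZMod 4 →+* ZMod 2 := ZMod.castHom (show (2:ℕ) ∣ 4 by norm_num) (ZMod 2)

noncomputable def hb (h : Polynomial (ZMod 4)) : Polynomial (ZMod 2) := h.map c24

noncomputable abbrev Sf (h : Polynomial (ZMod 4)) := AdjoinRoot (hb h)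

noncomputable def pr (h : Polynomial (ZMod 4)) : GR h →+* Sf h :=
  AdjoinRoot.lift ((AdjoinRoot.of (hb h)).comp c24) (AdjoinRoot.root (hb h)) (by
    rw [← Polynomial.eval₂_map]
    exact AdjoinRoot.eval₂_root _)

lemma pr_xi (h : Polynomial (ZMod 4)) : pr h (xi h) = AdjoinRoot.root (hb h) := by
  show pr h (AdjoinRoot.root h) = _
  exact AdjoinRoot.lift_root _

lemma pr_mk (h : Polynomial (ZMod 4)) (p : Polynomial (ZMod 4)) :
    pr h (AdjoinRoot.mk h p) = AdjoinRoot.mk (hb h) (p.map c24) := by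
  unfold pr
  erw [AdjoinRoot.lift_mk]
  rw [← Polynomial.eval₂_map, ← AdjoinRoot.algebraMap_eq,
    ← Polynomial.aeval_def, AdjoinRoot.aeval_eq]

lemma pr_algebraMap (h : Polynomial (ZMod 4)) (c : ZMod 4) :
    pr h (algebraMap (ZMod 4) (GR h) c) = algebraMap (ZMod 2) (Sf h) (c24 c) := by
  have : (pr h).comp (algebraMap (ZMod 4) (GR h))
      = (algebraMap (ZMod 2) (Sf h)).comp c24 := RingHom.ext_zmod _ _
  exact DFunLike.congr_fun this c

section Main

variable (n : ℕ) (h : Polynomial (ZMod 4)) (hbp : IsBasicPrimitive n h)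

lemma hb_monic (hbp : IsBasicPrimitive n h) : (hb h).Monic := hbp.monic.map c24

lemma hb_irred (hbp : IsBasicPrimitive n h) : Irreducible (hb h) := hbp.irred

lemma hb_ne_zero (hbp : IsBasicPrimitive n h) : hb h ≠ 0 :=
  (hb_monic n h hbp).ne_zero

lemma hb_deg (hbp : IsBasicPrimitive n h) : (hb h).natDegree = n := by
  rw [hb, hbp.monic.natDegree_map, hbp.deg]

lemma npos (hbp : IsBasicPrimitive n h) : 0 < n := by
  rw [← hb_deg n h hbp]
  exact Polynomial.natDegree_pos_iff_degree_pos.2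
    (Polynomial.degree_pos_of_irreducible (hb_irred n h hbp))

lemma two_Sf_eq_zero : (2 : Sf h) = 0 := by
  have h1 : (2 : Sf h) = algebraMap (ZMod 2) (Sf h) 2 := by rw [map_ofNat]
  rw [h1, show (2 : ZMod 2) = 0 by decide, map_zero]

lemma four_GR_eq_zero : (4 : GR h) = 0 := by
  have h1 : (4 : GR h) = algebraMap (ZMod 4) (GR h) 4 := by rw [map_ofNat]
  rw [h1, show (4 : ZMod 4) = 0 by decide, map_zero]

lemma four_mul_GR (x : GR h) : 4 * x = 0 := by
  rw [show (4 : GR h) * x = (4:GR h) * x from rfl, four_GR_eq_zero, zero_mul]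

lemma pr_two_mul (x : GR h) : pr h (2 * x) = 0 := by
  rw [map_mul, map_ofNat, two_Sf_eq_zero, zero_mul]

lemma algebraMap_GR_inj (hbp : IsBasicPrimitive n h) :
    Function.Injective (algebraMap (ZMod 4) (GR h)) := by
  rw [injective_iff_map_eq_zero]
  intro c hc
  have h1 : AdjoinRoot.mk h (Polynomial.C c) = 0 := hc
  rw [AdjoinRoot.mk_eq_zero] at h1
  by_cases hc0 : c = 0
  · exact hc0
  · refine absurd h1 (hbp.monic.not_dvd_of_natDegree_lt (Polynomial.C_ne_zero.2 hc0) ?_)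
    rw [Polynomial.natDegree_C, hbp.deg]
    exact npos n h hbp

lemma nontrivial_GR (hbp : IsBasicPrimitive n h) : Nontrivial (GR h) := by
  refine ⟨0, 1, fun e => ?_⟩
  have := algebraMap_GR_inj n h hbp (a₁ := 0) (a₂ := 1) (by rw [map_zero, map_one]; exact e)
  exact absurd this (by decide)

/-! ### kernel of `pr` -/

lemma c24_surj : Function.Surjective c24 := by decide

lemma half4 : ∀ c : ZMod 4, c24 c = 0 → ∃ d, c = 2 * d := by decide

lemma c24_of_two_mul : ∀ c : ZMod 4, 2 * c = 0 → c24 c = 0 := by decide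

lemma exists_half_poly (w : Polynomial (ZMod 4)) (hw : w.map c24 = 0) :
    ∃ v, w = 2 * v := by
  have hc : ∀ k : ℕ, ∃ d, w.coeff k = 2 * d := by
    intro k
    apply half4
    have := congrArg (fun p => Polynomial.coeff p k) hw
    simpa [Polynomial.coeff_map] using this
  choose d hd using hc
  set v : Polynomial (ZMod 4) := ∑ k ∈ w.support, Polynomial.C (d k) * Polynomial.X ^ k with hv
  have hvm : ∀ m : ℕ, v.coeff m = if m ∈ w.support then d m else 0 := by
    intro m
    rw [hv, Polynomial.finset_sum_coeff]
    simp_rw [Polynomial.coeff_C_mul, Polynomial.coeff_X_pow, mul_ite, mul_one, mul_zero]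
    exact Finset.sum_ite_eq w.support m d
  refine ⟨v, ?_⟩
  ext m
  by_cases hm : m ∈ w.support
  · calc w.coeff m = 2 * d m := hd m
      _ = (2 * v).coeff m := by
        rw [two_mul v, Polynomial.coeff_add, hvm, if_pos hm, ← two_mul]
  · calc w.coeff m = 0 := Polynomial.notMem_support_iff.1 hm
      _ = (2 * v).coeff m := by
        rw [two_mul v, Polynomial.coeff_add, hvm, if_neg hm, add_zero]

lemma map_zero_of_two_mul (w : Polynomial (ZMod 4)) (hw : 2 * w = 0) :
    w.map c24 = 0 := by
  ext m
  rw [Polynomial.coeff_map, Polynomial.coeff_zero]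
  apply c24_of_two_mul
  have h2 := congrArg (fun p => Polynomial.coeff p m) hw
  simp only [two_mul, Polynomial.coeff_add, Polynomial.coeff_zero] at h2
  rw [two_mul]
  exact h2

lemma two_poly2_eq_zero : (2 : Polynomial (ZMod 2)) = 0 := by
  calc (2 : Polynomial (ZMod 2)) = 1 + 1 := one_add_one_eq_two.symm
    _ = Polynomial.C 1 + Polynomial.C 1 := by rw [map_one]
    _ = Polynomial.C (1 + 1) := by rw [map_add]
    _ = Polynomial.C 0 := by rw [show (1 + 1 : ZMod 2) = 0 by decide]
    _ = 0 := map_zero _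

lemma pr_eq_zero_exists (x : GR h) (hx : pr h x = 0) : ∃ y, x = 2 * y := by
  obtain ⟨p, rfl⟩ := AdjoinRoot.mk_surjective (g := h) x
  rw [pr_mk, AdjoinRoot.mk_eq_zero] at hx
  obtain ⟨g, hg⟩ := hx
  obtain ⟨q, hq⟩ := Polynomial.map_surjective c24 c24_surj g
  have hmap : (p - q * h).map c24 = 0 := by
    rw [Polynomial.map_sub, Polynomial.map_mul, hq, hg]
    show hb h * g - g * h.map c24 = 0
    rw [show h.map c24 = hb h from rfl, mul_comm, sub_self]
  obtain ⟨v, hv⟩ := exists_half_poly (p - q * h) hmap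
  refine ⟨AdjoinRoot.mk h v, ?_⟩
  have h0 : AdjoinRoot.mk h (q * h) = 0 := by
    rw [map_mul, AdjoinRoot.mk_self, mul_zero]
  have h1 : AdjoinRoot.mk h (p - q*h) = 2 * AdjoinRoot.mk h v := by
    rw [hv, map_mul, map_ofNat]
  have h2 : AdjoinRoot.mk h p = AdjoinRoot.mk h (p - q*h) + AdjoinRoot.mk h (q*h) := by
    rw [← map_add, sub_add_cancel]
  rw [h2, h0, add_zero, h1]; rfl

lemma two_mul_eq_zero_of_pr (x : GR h) (hx : pr h x = 0) : 2 * x = 0 := by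
  obtain ⟨y, rfl⟩ := pr_eq_zero_exists h x hx
  rw [← mul_assoc, show (2:GR h) * 2 = 4 by norm_num, four_mul_GR]

lemma pr_eq_zero_of_two_mul (hbp : IsBasicPrimitive n h) (x : GR h) (hx : 2 * x = 0) :
    pr h x = 0 := by
  obtain ⟨p, rfl⟩ := AdjoinRoot.mk_surjective (g := h) x
  have h2 : AdjoinRoot.mk h (2 * p) = 0 := by rw [map_mul, map_ofNat]; exact hx
  rw [AdjoinRoot.mk_eq_zero] at h2
  obtain ⟨q, hq⟩ := h2
  have hmq : q.map c24 = 0 := by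
    have h3 : ((2 : Polynomial (ZMod 4)) * p).map c24 = hb h * q.map c24 := by
      rw [hq, Polynomial.map_mul]; rfl
    rw [Polynomial.map_mul, Polynomial.map_ofNat] at h3
    rw [two_poly2_eq_zero, zero_mul] at h3
    rcases mul_eq_zero.1 h3.symm with h4 | h4
    · exact absurd h4 (hb_ne_zero n h hbp)
    · exact h4
  obtain ⟨q', hq'⟩ := exists_half_poly q hmq
  have h3 : (2 : Polynomial (ZMod 4)) * (p - h * q') = 0 := by
    linear_combination hq + h * hq'
  have h4 : (p - h * q').map c24 = 0 := map_zero_of_two_mul _ h3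
  rw [pr_mk, AdjoinRoot.mk_eq_zero]
  refine ⟨q'.map c24, ?_⟩
  calc p.map c24 = ((p - h * q') + h * q').map c24 := by rw [sub_add_cancel]
    _ = (p - h*q').map c24 + (h * q').map c24 := Polynomial.map_add _
    _ = hb h * q'.map c24 := by rw [h4, zero_add, Polynomial.map_mul]; rfl

lemma pr_eq_zero_iff (hbp : IsBasicPrimitive n h) (x : GR h) : pr h x = 0 ↔ 2 * x = 0 :=
  ⟨two_mul_eq_zero_of_pr h x, pr_eq_zero_of_two_mul n h hbp x⟩

/-! ### The Teichmüller set -/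

lemma mem_Teich_iff (x : GR h) :
    x ∈ Teich n h ↔ x = 0 ∨ ∃ i, i < 2^n - 1 ∧ x = xi h ^ i := by
  classical
  constructor
  · intro hx
    rcases Finset.mem_insert.1 hx with h0 | himg
    · exact Or.inl h0
    · obtain ⟨k, hk, he⟩ := Finset.mem_image.1 himg
      exact Or.inr ⟨k, Finset.mem_range.1 hk, he.symm⟩
  · rintro (rfl | ⟨i, hi, rfl⟩)
    · exact Finset.mem_insert_self _ _
    · exact Finset.mem_insert_of_mem (Finset.mem_image.2 ⟨i, Finset.mem_range.2 hi, rfl⟩)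

lemma zero_mem_Teich : (0 : GR h) ∈ Teich n h := by
  classical
  exact Finset.mem_insert_self _ _

lemma two_pow_pred_pos (hbp : IsBasicPrimitive n h) : 0 < 2^n - 1 := by
  have := Nat.one_lt_two_pow_iff.2 (npos n h hbp).ne'
  omega

lemma xi_pow_mem (hbp : IsBasicPrimitive n h) (k : ℕ) : xi h ^ k ∈ Teich n h := by
  rw [mem_Teich_iff]
  right
  refine ⟨k % (2^n - 1), Nat.mod_lt _ (two_pow_pred_pos n h hbp), ?_⟩
  rw [show (2:ℕ)^n - 1 = orderOf (xi h) from hbp.xi_order.symm, pow_mod_orderOf]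

lemma mul_mem_Teich (hbp : IsBasicPrimitive n h) (x y : GR h)
    (hx : x ∈ Teich n h) (hy : y ∈ Teich n h) : x * y ∈ Teich n h := by
  rw [mem_Teich_iff] at hx hy
  rcases hx with rfl | ⟨i, _, rfl⟩
  · rw [zero_mul]; exact zero_mem_Teich n h
  rcases hy with rfl | ⟨j, _, rfl⟩
  · rw [mul_zero]; exact zero_mem_Teich n h
  · rw [← pow_add]; exact xi_pow_mem n h hbp _

lemma pow_mem_Teich (hbp : IsBasicPrimitive n h) (x : GR h) (hx : x ∈ Teich n h)
    (k : ℕ) (hk : 0 < k) : x ^ k ∈ Teich n h := by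
  rw [mem_Teich_iff] at hx
  rcases hx with rfl | ⟨i, _, rfl⟩
  · rw [zero_pow hk.ne']; exact zero_mem_Teich n h
  · rw [← pow_mul]; exact xi_pow_mem n h hbp _

lemma orderOf_zeta (hbp : IsBasicPrimitive n h) :
    orderOf (AdjoinRoot.root (hb h)) = 2^n - 1 := hbp.prim

lemma zeta_pow_ne_zero (hbp : IsBasicPrimitive n h) (i : ℕ) :
    (AdjoinRoot.root (hb h))^i ≠ 0 := by
  haveI := Fact.mk (hb_irred n h hbp)
  have h1 : (AdjoinRoot.root (hb h))^(2^n - 1) = 1 := by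
    rw [← orderOf_zeta n h hbp]; exact pow_orderOf_eq_one _
  have hu : IsUnit (AdjoinRoot.root (hb h)) :=
    IsUnit.of_pow_eq_one h1 (two_pow_pred_pos n h hbp).ne'
  exact (hu.pow i).ne_zero

lemma pr_inj_Teich (hbp : IsBasicPrimitive n h) :
    ∀ x ∈ Teich n h, ∀ y ∈ Teich n h, pr h x = pr h y → x = y := by
  intro x hx y hy e
  rw [mem_Teich_iff] at hx hy
  have hzo := orderOf_zeta n h hbp
  rcases hx with rfl | ⟨i, hi, rfl⟩ <;> rcases hy with rfl | ⟨j, hj, rfl⟩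
  · rfl
  · rw [map_zero, map_pow, pr_xi] at e
    exact absurd e.symm (zeta_pow_ne_zero n h hbp j)
  · rw [map_zero, map_pow, pr_xi] at e
    exact absurd e (zeta_pow_ne_zero n h hbp i)
  · rw [map_pow, map_pow, pr_xi] at e
    have : i = j := pow_injOn_Iio_orderOf
      (by rw [hzo]; exact Set.mem_Iio.2 hi) (by rw [hzo]; exact Set.mem_Iio.2 hj) e
    rw [this]

lemma card_Teich (hbp : IsBasicPrimitive n h) : (Teich n h).card = 2^n := by
  classical
  haveI := nontrivial_GR n h hbp
  have hu : IsUnit (xi h) := IsUnit.of_pow_eq_one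
    (by rw [← hbp.xi_order]; exact pow_orderOf_eq_one _) (two_pow_pred_pos n h hbp).ne'
  have h0 : (0:GR h) ∉ (Finset.range (2^n-1)).image (fun k => xi h ^ k) := by
    intro hmem
    obtain ⟨k, _, hk⟩ := Finset.mem_image.1 hmem
    exact (hu.pow k).ne_zero hk
  have hinj : Set.InjOn (fun k => xi h ^ k) ↑(Finset.range (2^n-1)) := by
    intro a ha b hb e
    exact pow_injOn_Iio_orderOf
      (by rw [hbp.xi_order]; exact Set.mem_Iio.2 (Finset.mem_range.1 (Finset.mem_coe.1 ha)))
      (by rw [hbp.xi_order]; exact Set.mem_Iio.2 (Finset.mem_range.1 (Finset.mem_coe.1 hb))) e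
  rw [Teich]
  rw [Finset.card_insert_of_notMem (by convert h0), Finset.card_image_of_injOn hinj,
    Finset.card_range]
  have := Nat.one_lt_two_pow_iff.2 (npos n h hbp).ne'
  omega

/-! ### Teichmüller lift -/

noncomputable def L (n : ℕ) (h : Polynomial (ZMod 4)) : Sf h → GR h := fun s =>
  if hs : ∃ x ∈ Teich n h, pr h x = s then hs.choose else 0

lemma card_Sf (hbp : IsBasicPrimitive n h) [Fintype (Sf h)] :
    Fintype.card (Sf h) = 2^n := by
  classical
  rw [Fintype.card_congr (AdjoinRoot.powerBasis (hb_ne_zero n h hbp)).basis.equivFun.toEquiv,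
    Fintype.card_fun, Fintype.card_fin, AdjoinRoot.powerBasis_dim, hb_deg n h hbp, ZMod.card]

lemma pr_surj_Teich (hbp : IsBasicPrimitive n h) [Fintype (Sf h)] (s : Sf h) :
    ∃ x ∈ Teich n h, pr h x = s := by
  classical
  have himg : (Teich n h).image (pr h) = Finset.univ := by
    apply Finset.eq_univ_of_card
    rw [Finset.card_image_of_injOn
      (fun x hx y hy e => pr_inj_Teich n h hbp x (Finset.mem_coe.1 hx) y (Finset.mem_coe.1 hy) e),
      card_Teich n h hbp, card_Sf n h hbp]
  have : s ∈ (Teich n h).image (pr h) := by rw [himg]; exact Finset.mem_univ s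
  obtain ⟨x, hx, he⟩ := Finset.mem_image.1 this
  exact ⟨x, hx, he⟩

lemma L_mem (hbp : IsBasicPrimitive n h) [Fintype (Sf h)] (s : Sf h) :
    L n h s ∈ Teich n h := by
  unfold L
  rw [dif_pos (pr_surj_Teich n h hbp s)]
  exact (pr_surj_Teich n h hbp s).choose_spec.1

lemma pr_L (hbp : IsBasicPrimitive n h) [Fintype (Sf h)] (s : Sf h) :
    pr h (L n h s) = s := by
  unfold L
  rw [dif_pos (pr_surj_Teich n h hbp s)]
  exact (pr_surj_Teich n h hbp s).choose_spec.2

lemma L_pr (hbp : IsBasicPrimitive n h) [Fintype (Sf h)] (x : GR h)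
    (hx : x ∈ Teich n h) : L n h (pr h x) = x :=
  pr_inj_Teich n h hbp _ (L_mem n h hbp _) x hx (pr_L n h hbp _)

lemma two_mul_rep (hbp : IsBasicPrimitive n h) [Fintype (Sf h)] (y : GR h) :
    2 * y = 2 * L n h (pr h y) := by
  have h1 : pr h (y - L n h (pr h y)) = 0 := by
    rw [map_sub, pr_L n h hbp]; exact sub_self _
  have h2 := two_mul_eq_zero_of_pr h _ h1
  linear_combination h2

lemma exists_rep (hbp : IsBasicPrimitive n h) [Fintype (Sf h)] (x : GR h) :
    ∃ a ∈ Teich n h, ∃ b ∈ Teich n h, x = a + 2 * b := by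
  have ha : pr h (x - L n h (pr h x)) = 0 := by
    rw [map_sub, pr_L n h hbp]; exact sub_self _
  obtain ⟨y, hy⟩ := pr_eq_zero_exists h _ ha
  refine ⟨L n h (pr h x), L_mem n h hbp _, L n h (pr h y), L_mem n h hbp _, ?_⟩
  have h2 := two_mul_rep n h hbp y
  linear_combination hy + h2

/-! ### power identities -/

lemma sq_two_part (x b : GR h) : (x + 2*b)^2 = x^2 := by
  have e : (x + 2*b)^2 = x^2 + 4*(x*b + b*b) := by ring
  rw [e, four_mul_GR, add_zero]

lemma pow_two_pow_two_part (x b : GR h) (k : ℕ) (hk : 0 < k) :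
    (x + 2*b)^(2^k) = x^(2^k) := by
  induction k with
  | zero => omega
  | succ m ih =>
    rcases Nat.eq_zero_or_pos m with rfl | hm
    · simpa using sq_two_part h x b
    · rw [pow_succ, pow_mul, pow_mul, ih hm]

lemma pow_two_pow_add (x y : GR h) (m : ℕ) :
    (x + y)^(2^(m+1)) = x^(2^(m+1)) + y^(2^(m+1)) + 2*(x*y)^(2^m) := by
  induction m with
  | zero => norm_num; ring
  | succ m ih =>
    have e1 : (x+y)^(2^(m+1+1)) = ((x+y)^(2^(m+1)))^2 := by
      rw [← pow_mul, ← pow_succ]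
    rw [e1, ih]
    have h1 : (x^(2^(m+1)) + y^(2^(m+1)) + 2*(x*y)^(2^m))^2
        = (x^(2^(m+1)) + y^(2^(m+1)))^2 := by
      rw [show x^(2^(m+1)) + y^(2^(m+1)) + 2*(x*y)^(2^m)
        = (x^(2^(m+1)) + y^(2^(m+1))) + 2*((x*y)^(2^m)) by ring]
      exact sq_two_part h _ _
    rw [h1]
    have h2 : (x^(2^(m+1)) + y^(2^(m+1)))^2
        = (x^(2^(m+1)))^2 + (y^(2^(m+1)))^2 + 2*(x^(2^(m+1)) * y^(2^(m+1))) := by ring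
    rw [h2]
    have ex : (2:ℕ)^(m+1+1) = 2^(m+1) * 2 := pow_succ 2 (m+1)
    rw [ex, pow_mul, pow_mul, mul_pow]

lemma Teich_pow_fix (hbp : IsBasicPrimitive n h) (x : GR h) (hx : x ∈ Teich n h) :
    x^(2^n) = x := by
  rw [mem_Teich_iff] at hx
  rcases hx with rfl | ⟨i, _, rfl⟩
  · exact zero_pow (by positivity)
  · rw [← pow_mul]
    have h1 : i * 2^n = i * (2^n - 1) + i := by
      have h2 : 1 ≤ (2:ℕ)^n := Nat.one_le_two_pow
      have h3 : i * 2^n = i * ((2^n - 1) + 1) := by rw [Nat.sub_add_cancel h2]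
      rw [h3]; ring
    rw [h1, pow_add, pow_mul', ← hbp.xi_order, pow_orderOf_eq_one, one_pow, one_mul]

lemma Npow_decomp (hbp : IsBasicPrimitive n h) [Fintype (Sf h)] (x : GR h) :
    (∃ b ∈ Teich n h, x = x^(2^n) + 2*b) ∧ x^(2^n) ∈ Teich n h := by
  obtain ⟨a, ha, b, hb, hx⟩ := exists_rep n h hbp x
  have hN : x^(2^n) = a := by
    rw [hx, pow_two_pow_two_part h a b n (npos n h hbp)]
    exact Teich_pow_fix n h hbp a ha
  exact ⟨⟨b, hb, by rw [hN]; exact hx⟩, by rw [hN]; exact ha⟩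

lemma teich_add (hbp : IsBasicPrimitive n h) (x y : GR h)
    (hx : x ∈ Teich n h) (hy : y ∈ Teich n h) :
    (x + y)^(2^n) = x + y + 2*(x*y)^(2^(n-1)) := by
  obtain ⟨m, hm⟩ : ∃ m, n = m + 1 := ⟨n-1, by have := npos n h hbp; omega⟩
  subst hm
  rw [Nat.add_sub_cancel, pow_two_pow_add h x y m,
    Teich_pow_fix (m+1) h hbp x hx, Teich_pow_fix (m+1) h hbp y hy]

/-! ### sigma and trace -/

lemma sq_eq_of_two_mul_eq (hbp : IsBasicPrimitive n h) (u v : GR h)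
    (huv : 2*u = 2*v) : u^2 = v^2 := by
  have h1 : 2*(u - v) = 0 := by linear_combination huv
  obtain ⟨z, hz⟩ := pr_eq_zero_exists h _ (pr_eq_zero_of_two_mul n h hbp _ h1)
  have h2 : u = v + 2*z := by linear_combination hz
  rw [h2]
  exact sq_two_part h v z

variable (σ : GR h → GR h) (tr : GR h → ZMod 4)

lemma sigma_add (hbp : IsBasicPrimitive n h) [Fintype (Sf h)]
    (hσ : ∀ a b : GR h, a ∈ Teich n h → b ∈ Teich n h →
      σ (a + 2 * b) = a ^ 2 + 2 * b ^ 2) (x y : GR h) :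
    σ (x + y) = σ x + σ y := by
  obtain ⟨a, ha, b, hb, hx⟩ := exists_rep n h hbp x
  obtain ⟨c, hc, d, hd, hy⟩ := exists_rep n h hbp y
  have hAmem : (a+c)^(2^n) ∈ Teich n h := (Npow_decomp n h hbp (a+c)).2
  have htmem : (a*c)^(2^(n-1)) ∈ Teich n h :=
    pow_mem_Teich n h hbp _ (mul_mem_Teich n h hbp a c ha hc) _ (by positivity)
  have hAval : (a+c)^(2^n) = a + c + 2*(a*c)^(2^(n-1)) := teich_add n h hbp a c ha hc
  have hemem : L n h (pr h ((a*c)^(2^(n-1)) + b + d)) ∈ Teich n h := L_mem n h hbp _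
  have h2e : 2*((a*c)^(2^(n-1)) + b + d)
      = 2 * L n h (pr h ((a*c)^(2^(n-1)) + b + d)) := two_mul_rep n h hbp _
  have hxy : x + y = (a+c)^(2^n) + 2 * L n h (pr h ((a*c)^(2^(n-1)) + b + d)) := by
    rw [hx, hy]
    linear_combination -hAval - four_mul_GR h ((a*c)^(2^(n-1))) + h2e
  have hs1 : σ (x+y) = ((a+c)^(2^n))^2
      + 2*(L n h (pr h ((a*c)^(2^(n-1)) + b + d)))^2 := by
    rw [hxy]; exact hσ _ _ hAmem hemem
  have hsq : (L n h (pr h ((a*c)^(2^(n-1)) + b + d)))^2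
      = ((a*c)^(2^(n-1)) + b + d)^2 := sq_eq_of_two_mul_eq n h hbp _ _ h2e.symm
  have hs2 : σ x = a^2 + 2*b^2 := by rw [hx]; exact hσ a b ha hb
  have hs3 : σ y = c^2 + 2*d^2 := by rw [hy]; exact hσ c d hc hd
  have hA2 : ((a+c)^(2^n))^2 = (a+c)^2 := by
    rw [hAval, show a + c + 2*(a*c)^(2^(n-1)) = (a+c) + 2*((a*c)^(2^(n-1))) by ring,
      sq_two_part h]
  have ht2 : ((a*c)^(2^(n-1)))^2 = a*c := by
    rw [← pow_mul]
    obtain ⟨m, hm⟩ : ∃ m, n = m + 1 := ⟨n-1, by have := npos n h hbp; omega⟩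
    subst hm
    rw [Nat.add_sub_cancel, ← pow_succ]
    exact Teich_pow_fix (m+1) h hbp _ (mul_mem_Teich (m+1) h hbp a c ha hc)
  rw [hs1, hsq, hA2, hs2, hs3]
  linear_combination 2*ht2 + four_mul_GR h (a*c)
    + four_mul_GR h ((a*c)^(2^(n-1))*b + (a*c)^(2^(n-1))*d + b*d)

lemma sigma_zero
    (hσ : ∀ a b : GR h, a ∈ Teich n h → b ∈ Teich n h →
      σ (a + 2 * b) = a ^ 2 + 2 * b ^ 2) : σ 0 = 0 := by
  have := hσ 0 0 (zero_mem_Teich n h) (zero_mem_Teich n h)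
  simpa using this

lemma sigma_iter_add (hbp : IsBasicPrimitive n h) [Fintype (Sf h)]
    (hσ : ∀ a b : GR h, a ∈ Teich n h → b ∈ Teich n h →
      σ (a + 2 * b) = a ^ 2 + 2 * b ^ 2) (k : ℕ) (x y : GR h) :
    σ^[k] (x + y) = σ^[k] x + σ^[k] y := by
  induction k with
  | zero => simp
  | succ m ih =>
    rw [Function.iterate_succ_apply', Function.iterate_succ_apply',
      Function.iterate_succ_apply', ih]
    exact sigma_add n h σ hbp hσ _ _

lemma tr_add (hbp : IsBasicPrimitive n h) [Fintype (Sf h)]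
    (hσ : ∀ a b : GR h, a ∈ Teich n h → b ∈ Teich n h →
      σ (a + 2 * b) = a ^ 2 + 2 * b ^ 2)
    (htr : ∀ r : GR h,
      algebraMap (ZMod 4) (GR h) (tr r) = ∑ k ∈ Finset.range n, σ^[k] r)
    (x y : GR h) : tr (x + y) = tr x + tr y := by
  apply algebraMap_GR_inj n h hbp
  rw [map_add, htr, htr, htr, ← Finset.sum_add_distrib]
  exact Finset.sum_congr rfl (fun k _ => sigma_iter_add n h σ hbp hσ k x y)

lemma tr_zero
    (hσ : ∀ a b : GR h, a ∈ Teich n h → b ∈ Teich n h →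
      σ (a + 2 * b) = a ^ 2 + 2 * b ^ 2)
    (htr : ∀ r : GR h,
      algebraMap (ZMod 4) (GR h) (tr r) = ∑ k ∈ Finset.range n, σ^[k] r)
    (hbp : IsBasicPrimitive n h) : tr 0 = 0 := by
  apply algebraMap_GR_inj n h hbp
  rw [map_zero, htr]
  apply Finset.sum_eq_zero
  intro k _
  rw [Function.iterate_fixed (sigma_zero n h σ hσ) k]

lemma tr_two_mul (hbp : IsBasicPrimitive n h) [Fintype (Sf h)]
    (hσ : ∀ a b : GR h, a ∈ Teich n h → b ∈ Teich n h →
      σ (a + 2 * b) = a ^ 2 + 2 * b ^ 2)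
    (htr : ∀ r : GR h,
      algebraMap (ZMod 4) (GR h) (tr r) = ∑ k ∈ Finset.range n, σ^[k] r)
    (x : GR h) : tr (2 * x) = 2 * tr x := by
  rw [two_mul, tr_add n h σ tr hbp hσ htr, ← two_mul]

lemma eta_tr_add_two (hbp : IsBasicPrimitive n h) [Fintype (Sf h)]
    (hσ : ∀ a b : GR h, a ∈ Teich n h → b ∈ Teich n h →
      σ (a + 2 * b) = a ^ 2 + 2 * b ^ 2)
    (htr : ∀ r : GR h,
      algebraMap (ZMod 4) (GR h) (tr r) = ∑ k ∈ Finset.range n, σ^[k] r)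
    (x w : GR h) : eta (tr (x + 2*w)) = eta (tr x) := by
  rw [tr_add n h σ tr hbp hσ htr, tr_two_mul n h σ tr hbp hσ htr, eta_add_two_mul]

/-! ### trace is odd somewhere -/

lemma pr_sigma (hbp : IsBasicPrimitive n h) [Fintype (Sf h)]
    (hσ : ∀ a b : GR h, a ∈ Teich n h → b ∈ Teich n h →
      σ (a + 2 * b) = a ^ 2 + 2 * b ^ 2) (x : GR h) :
    pr h (σ x) = (pr h x)^2 := by
  obtain ⟨a, ha, b, hb, hx⟩ := exists_rep n h hbp x
  have hpx : pr h (a + 2*b) = pr h a := by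
    rw [map_add, pr_two_mul, add_zero]
  rw [hx, hσ a b ha hb, map_add, map_mul, map_pow, map_pow, map_ofNat,
    two_Sf_eq_zero, zero_mul, add_zero, hpx]

lemma pr_sigma_iter (hbp : IsBasicPrimitive n h) [Fintype (Sf h)]
    (hσ : ∀ a b : GR h, a ∈ Teich n h → b ∈ Teich n h →
      σ (a + 2 * b) = a ^ 2 + 2 * b ^ 2) (k : ℕ) (x : GR h) :
    pr h (σ^[k] x) = (pr h x)^(2^k) := by
  induction k with
  | zero => simp
  | succ m ih =>
    rw [Function.iterate_succ_apply', pr_sigma n h σ hbp hσ, ih, ← pow_mul, ← pow_succ]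

lemma exists_tr_odd (hbp : IsBasicPrimitive n h) [Fintype (Sf h)]
    (hσ : ∀ a b : GR h, a ∈ Teich n h → b ∈ Teich n h →
      σ (a + 2 * b) = a ^ 2 + 2 * b ^ 2)
    (htr : ∀ r : GR h,
      algebraMap (ZMod 4) (GR h) (tr r) = ∑ k ∈ Finset.range n, σ^[k] r) :
    ∃ w : GR h, eta (tr w) ≠ 1 := by
  haveI := Fact.mk (hb_irred n h hbp)
  by_contra hc
  push_neg at hc
  have hall : ∀ s : Sf h, ∑ k ∈ Finset.range n, s^(2^k) = 0 := by
    intro s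
    obtain ⟨z, _, hzs⟩ := pr_surj_Teich n h hbp s
    have h1 : 2 * tr z = 0 := eta_eq_one_imp _ (hc z)
    have h2 : 2 * (algebraMap (ZMod 4) (GR h)) (tr z) = 0 := by
      rw [show (2:GR h) * (algebraMap (ZMod 4) (GR h)) (tr z)
        = (algebraMap (ZMod 4) (GR h)) (2 * tr z) by rw [map_mul, map_ofNat], h1, map_zero]
    have h3 : pr h ((algebraMap (ZMod 4) (GR h)) (tr z)) = 0 :=
      pr_eq_zero_of_two_mul n h hbp _ h2
    rw [htr z, map_sum] at h3
    calc ∑ k ∈ Finset.range n, s^(2^k)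
        = ∑ k ∈ Finset.range n, pr h (σ^[k] z) :=
          Finset.sum_congr rfl (fun k _ => by rw [pr_sigma_iter n h σ hbp hσ, hzs])
      _ = 0 := h3
  set P : Polynomial (Sf h) := ∑ k ∈ Finset.range n, (Polynomial.X)^(2^k) with hP
  have hdeg : P.natDegree ≤ 2^(n-1) := by
    apply Polynomial.natDegree_sum_le_of_forall_le
    intro k hk
    rw [Polynomial.natDegree_X_pow]
    exact Nat.pow_le_pow_right (by norm_num) (by have := Finset.mem_range.1 hk; omega)
  have hco : P.coeff 1 = 1 := by
    rw [hP, Polynomial.finset_sum_coeff]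
    have hterm : ∀ k : ℕ, ((Polynomial.X : Polynomial (Sf h))^(2^k)).coeff 1
        = if (1:ℕ) = 2^k then 1 else 0 := fun k => Polynomial.coeff_X_pow _ _
    rw [Finset.sum_congr rfl (fun k _ => hterm k),
      Finset.sum_eq_single_of_mem 0 (Finset.mem_range.2 (npos n h hbp))]
    · norm_num
    · intro k _ hk0
      rw [if_neg]
      exact fun e => absurd e.symm (Nat.one_lt_two_pow_iff.2 hk0).ne'
  have hPne : P ≠ 0 := fun h0 => by
    rw [h0, Polynomial.coeff_zero] at hco; exact zero_ne_one hco
  have heval : ∀ s : Sf h, P.eval s = 0 := by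
    intro s
    rw [hP, Polynomial.eval_finset_sum]
    simpa [Polynomial.eval_pow] using hall s
  have hcard : P.natDegree < Fintype.card (Sf h) := by
    rw [card_Sf n h hbp]
    calc P.natDegree ≤ 2^(n-1) := hdeg
      _ < 2^n := Nat.pow_lt_pow_right (by norm_num) (by have := npos n h hbp; omega)
  exact hPne (Polynomial.eq_zero_of_natDegree_lt_card_of_eval_eq_zero' P Finset.univ
    (fun s _ => heval s) (by rw [Finset.card_univ]; exact hcard))

/-! ### units -/

lemma unit_of_pr_ne (hbp : IsBasicPrimitive n h) [Fintype (Sf h)] (r : GR h)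
    (hr : pr h r ≠ 0) : ∃ r', r * r' = 1 := by
  haveI := Fact.mk (hb_irred n h hbp)
  obtain ⟨sinv, hs⟩ : ∃ s, pr h r * s = 1 := ⟨(pr h r)⁻¹, mul_inv_cancel₀ hr⟩
  obtain ⟨z, _, hzs⟩ := pr_surj_Teich n h hbp sinv
  have h1 : pr h (r * z - 1) = 0 := by rw [map_sub, map_mul, hzs, hs, map_one, sub_self]
  obtain ⟨w, hw⟩ := pr_eq_zero_exists h _ h1
  refine ⟨z + 2*(z*w), ?_⟩
  have h2 : r*z = 1 + 2*w := by linear_combination hw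
  calc r * (z + 2*(z*w)) = (r*z) + 2*((r*z)*w) := by ring
    _ = (1+2*w) + 2*((1+2*w)*w) := by rw [h2]
    _ = 1 + 4*(w + w*w) := by ring
    _ = 1 := by rw [four_mul_GR, add_zero]

lemma pr_teich_ne_zero (hbp : IsBasicPrimitive n h) (t : GR h)
    (ht : t ∈ Teich n h) (ht0 : t ≠ 0) : pr h t ≠ 0 := by
  intro e
  exact ht0 (pr_inj_Teich n h hbp t ht 0 (zero_mem_Teich n h) (by rw [e, map_zero]))

/-! ### Frobenius surjectivity on Sf -/

lemma sq_inj_Sf (hbp : IsBasicPrimitive n h) :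
    Function.Injective (fun s : Sf h => s^2) := by
  haveI := Fact.mk (hb_irred n h hbp)
  intro x y e
  simp only at e
  have hexp : (x - y)^2 = x^2 - y^2 + 2*(y*y - x*y) := by ring
  rw [e, sub_self, zero_add, two_Sf_eq_zero, zero_mul] at hexp
  have := pow_eq_zero_iff (two_ne_zero) |>.1 hexp
  exact sub_eq_zero.1 this

lemma frob_pow_surj (hbp : IsBasicPrimitive n h) [Fintype (Sf h)] (m : ℕ) :
    Function.Surjective (fun s : Sf h => s^(2^m)) := by
  have hsq : Function.Surjective (fun s : Sf h => s^2) :=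
    Finite.injective_iff_surjective.1 (sq_inj_Sf n h hbp)
  induction m with
  | zero => intro s; exact ⟨s, by simpa using pow_one s⟩
  | succ m ih =>
    intro s
    obtain ⟨u, hu⟩ := hsq s
    obtain ⟨v, hv⟩ := ih u
    refine ⟨v, ?_⟩
    simp only at hu hv ⊢
    rw [pow_succ, pow_mul, hv, hu]

/-! ### sum transport -/

lemma sum_Teich (hbp : IsBasicPrimitive n h) [Fintype (Sf h)] (f : GR h → ℂ) :
    ∑ x ∈ Teich n h, f x = ∑ s : Sf h, f (L n h s) := by
  refine Finset.sum_bij' (fun x _ => pr h x) (fun s _ => L n h s) ?_ ?_ ?_ ?_ ?_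
  · intro a ha; exact Finset.mem_univ _
  · intro s _; exact L_mem n h hbp s
  · intro a ha; exact L_pr n h hbp a ha
  · intro s _; exact pr_L n h hbp s
  · intro a ha; rw [L_pr n h hbp a ha]

lemma Om_two_mul' (v : ZMod 4) : Om (2*v) = eta v := Om_two_mul v

lemma L_add_split (hbp : IsBasicPrimitive n h) [Fintype (Sf h)] (s1 s2 : Sf h) :
    ∃ w, L n h (s1 + s2) = L n h s1 + L n h s2 + 2*w := by
  have hz : pr h (L n h (s1+s2) - L n h s1 - L n h s2) = 0 := by
    rw [map_sub, map_sub, pr_L n h hbp, pr_L n h hbp, pr_L n h hbp]; ring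
  obtain ⟨w, hw⟩ := pr_eq_zero_exists h _ hz
  exact ⟨w, by linear_combination hw⟩

/-! ### the 2T case -/

lemma gamma_two (hbp : IsBasicPrimitive n h) [Fintype (Sf h)]
    (hσ : ∀ a b : GR h, a ∈ Teich n h → b ∈ Teich n h →
      σ (a + 2 * b) = a ^ 2 + 2 * b ^ 2)
    (htr : ∀ r : GR h,
      algebraMap (ZMod 4) (GR h) (tr r) = ∑ k ∈ Finset.range n, σ^[k] r)
    (t : GR h) (ht : t ∈ Teich n h) (ht0 : t ≠ 0) :
    ∑ x ∈ Teich n h, Om (tr (2 * t * x)) = 0 := by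
  have hterm : ∀ x ∈ Teich n h, Om (tr (2*t*x)) = eta (tr (t*x)) := by
    intro x _
    rw [mul_assoc, tr_two_mul n h σ tr hbp hσ htr, Om_two_mul']
  rw [Finset.sum_congr rfl hterm, sum_Teich n h hbp (fun x => eta (tr (t*x)))]
  have hadd : ∀ s1 s2 : Sf h,
      eta (tr (t * L n h (s1 + s2))) = eta (tr (t * L n h s1)) * eta (tr (t * L n h s2)) := by
    intro s1 s2
    obtain ⟨w, hL⟩ := L_add_split n h hbp s1 s2
    have harg : t * L n h (s1+s2) = t * L n h s1 + (t * L n h s2 + 2*(t*w)) := by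
      rw [hL]; ring
    rw [harg, tr_add n h σ tr hbp hσ htr, eta_add,
      tr_add n h σ tr hbp hσ htr, tr_two_mul n h σ tr hbp hσ htr, eta_add_two_mul]
  obtain ⟨w₀, hw₀⟩ := exists_tr_odd n h σ tr hbp hσ htr
  obtain ⟨t', ht'⟩ := unit_of_pr_ne n h hbp t (pr_teich_ne_zero n h hbp t ht ht0)
  have hne : eta (tr (t * L n h (pr h (t' * w₀)))) ≠ 1 := by
    have hz : pr h (L n h (pr h (t' * w₀)) - t' * w₀) = 0 := by
      rw [map_sub, pr_L n h hbp, sub_self]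
    obtain ⟨w, hw⟩ := pr_eq_zero_exists h _ hz
    have harg : t * L n h (pr h (t' * w₀)) = w₀ + 2*(t*w) := by
      have hLv : L n h (pr h (t' * w₀)) = t' * w₀ + 2*w := by linear_combination hw
      rw [hLv]
      linear_combination w₀ * ht'
    rw [harg, eta_tr_add_two n h σ tr hbp hσ htr]
    exact hw₀
  exact sum_char _ hadd _ hne

/-! ### the unit case -/

lemma pow_add_split (A B C : GR h) (m : ℕ) :
    ∃ w', (A+B+2*C)^(2^m) = A^(2^m) + B^(2^m) + 2*w' := by
  rcases Nat.eq_zero_or_pos m with rfl | hm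
  · exact ⟨C, by norm_num⟩
  · obtain ⟨m', rfl⟩ : ∃ m', m = m'+1 := ⟨m-1, by omega⟩
    refine ⟨(A*B)^(2^m'), ?_⟩
    rw [show A+B+2*C = (A+B) + 2*C by ring,
      pow_two_pow_two_part h (A+B) C (m'+1) (by omega), pow_two_pow_add h A B m']

lemma add_npow_invol (hbp : IsBasicPrimitive n h) [Fintype (Sf h)] (y u : GR h)
    (hy : y ∈ Teich n h) (hu : u ∈ Teich n h) :
    (y + (y+u)^(2^n))^(2^n) = u := by
  haveI := Fact.mk (hb_irred n h hbp)
  apply pr_inj_Teich n h hbp _ (Npow_decomp n h hbp _).2 u hu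
  have hq : ∀ s : Sf h, s^(2^n) = s := by
    intro s
    rw [← card_Sf n h hbp]
    exact FiniteField.pow_card s
  have h2 : ∀ s : Sf h, s + s = 0 := by
    intro s
    rw [← two_mul, two_Sf_eq_zero, zero_mul]
  rw [map_pow, map_add, map_pow, map_add, hq, hq]
  rw [show pr h y + (pr h y + pr h u) = (pr h y + pr h y) + pr h u by ring, h2, zero_add]

lemma gamma_unit (hbp : IsBasicPrimitive n h) [Fintype (Sf h)]
    (hσ : ∀ a b : GR h, a ∈ Teich n h → b ∈ Teich n h →
      σ (a + 2 * b) = a ^ 2 + 2 * b ^ 2)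
    (htr : ∀ r : GR h,
      algebraMap (ZMod 4) (GR h) (tr r) = ∑ k ∈ Finset.range n, σ^[k] r)
    (r : GR h) (hr : pr h r ≠ 0) :
    (∑ x ∈ Teich n h, Om (tr (r*x))) * (starRingEnd ℂ) (∑ x ∈ Teich n h, Om (tr (r*x)))
      = (2^n : ℂ) := by
  classical
  haveI := Fact.mk (hb_irred n h hbp)
  rw [map_sum, Finset.sum_mul_sum, Finset.sum_comm]
  have inner : ∀ y ∈ Teich n h,
      (∑ x ∈ Teich n h, Om (tr (r*x)) * (starRingEnd ℂ) (Om (tr (r*y))))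
      = ∑ u ∈ Teich n h, Om (tr (r*u)) * eta (tr (r * (y*u)^(2^(n-1)))) := by
    intro y hy
    refine (Finset.sum_bij' (fun u (_ : u ∈ Teich n h) => (y+u)^(2^n))
      (fun x (_ : x ∈ Teich n h) => (y+x)^(2^n)) ?_ ?_ ?_ ?_ ?_).symm
    · intro a _; exact (Npow_decomp n h hbp _).2
    · intro a _; exact (Npow_decomp n h hbp _).2
    · intro u hu; exact add_npow_invol n h hbp y u hy hu
    · intro x hx; exact add_npow_invol n h hbp y x hy hx
    · intro u hu
      have hΦ : (y+u)^(2^n) = y + u + 2*(y*u)^(2^(n-1)) := teich_add n h hbp y u hy hu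
      have harg : r * ((y+u)^(2^n)) = r*y + (r*u + 2*(r*((y*u)^(2^(n-1))))) := by
        rw [hΦ]; ring
      rw [harg, tr_add n h σ tr hbp hσ htr, Om_add, tr_add n h σ tr hbp hσ htr,
        tr_two_mul n h σ tr hbp hσ htr, Om_add, Om_two_mul']
      rw [show Om (tr (r*y)) * (Om (tr (r*u)) * eta (tr (r*((y*u)^(2^(n-1))))))
          * (starRingEnd ℂ) (Om (tr (r*y)))
        = (Om (tr (r*y)) * (starRingEnd ℂ) (Om (tr (r*y))))
          * (Om (tr (r*u)) * eta (tr (r*((y*u)^(2^(n-1)))))) by ring, Om_mul_conj, one_mul]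
  rw [Finset.sum_congr rfl inner, Finset.sum_comm]
  have hIu : ∀ u ∈ Teich n h, u ≠ 0 →
      ∑ y ∈ Teich n h, eta (tr (r * (y*u)^(2^(n-1)))) = 0 := by
    intro u hu hu0
    rw [sum_Teich n h hbp (fun y => eta (tr (r * (y*u)^(2^(n-1)))))]
    have hadd : ∀ s1 s2 : Sf h,
        eta (tr (r * (L n h (s1+s2) * u)^(2^(n-1))))
        = eta (tr (r * (L n h s1 * u)^(2^(n-1))))
          * eta (tr (r * (L n h s2 * u)^(2^(n-1)))) := by
      intro s1 s2
      obtain ⟨w, hL⟩ := L_add_split n h hbp s1 s2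
      have hmul : L n h (s1+s2) * u = L n h s1 * u + L n h s2 * u + 2*(w*u) := by
        rw [hL]; ring
      obtain ⟨w', hw'⟩ := pow_add_split h (L n h s1 * u) (L n h s2 * u) (w*u) (n-1)
      have harg : r * ((L n h s1 * u)^(2^(n-1)) + (L n h s2 * u)^(2^(n-1)) + 2*w')
          = r*(L n h s1 * u)^(2^(n-1)) + ((r*(L n h s2 * u)^(2^(n-1))) + 2*(r*w')) := by
        ring
      rw [hmul, hw', harg, tr_add n h σ tr hbp hσ htr, eta_add,
        eta_tr_add_two n h σ tr hbp hσ htr]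
    obtain ⟨w₀, hw₀⟩ := exists_tr_odd n h σ tr hbp hσ htr
    obtain ⟨r', hr'⟩ := unit_of_pr_ne n h hbp r hr
    obtain ⟨u', hu'⟩ := unit_of_pr_ne n h hbp u (pr_teich_ne_zero n h hbp u hu hu0)
    obtain ⟨g, hg⟩ := frob_pow_surj n h hbp (n-1) (pr h (r' * w₀) * (pr h u')^(2^(n-1)))
    simp only at hg
    have hprX : pr h ((L n h g * u)^(2^(n-1))) = pr h (r' * w₀) := by
      rw [map_pow, map_mul, pr_L n h hbp, mul_pow, hg, mul_assoc, ← mul_pow, ← map_mul]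
      rw [show u' * u = 1 by linear_combination hu', map_one, one_pow, mul_one]
    have hne : eta (tr (r * (L n h g * u)^(2^(n-1)))) ≠ 1 := by
      have hz : pr h ((L n h g * u)^(2^(n-1)) - r'*w₀) = 0 := by
        rw [map_sub, hprX, sub_self]
      obtain ⟨w₂, hw₂⟩ := pr_eq_zero_exists h _ hz
      have harg : r * (L n h g * u)^(2^(n-1)) = w₀ + 2*(r*w₂) := by
        have hX : (L n h g * u)^(2^(n-1)) = r'*w₀ + 2*w₂ := by linear_combination hw₂
        rw [hX]
        linear_combination w₀ * hr'
      rw [harg, eta_tr_add_two n h σ tr hbp hσ htr]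
      exact hw₀
    exact sum_char _ hadd g hne
  have hmain : ∀ u ∈ Teich n h,
      (∑ y ∈ Teich n h, Om (tr (r*u)) * eta (tr (r * (y*u)^(2^(n-1)))))
      = if u = 0 then (2^n : ℂ) else 0 := by
    intro u hu
    rw [← Finset.mul_sum]
    by_cases hu0 : u = 0
    · subst hu0
      rw [if_pos rfl]
      have hterm : ∀ y ∈ Teich n h, eta (tr (r * (y*0)^(2^(n-1)))) = 1 := by
        intro y _
        rw [mul_zero, zero_pow (by positivity : (2:ℕ)^(n-1) ≠ 0), mul_zero,
          tr_zero n h σ tr hσ htr hbp, eta_zero]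
      rw [Finset.sum_congr rfl hterm, Finset.sum_const, card_Teich n h hbp,
        nsmul_eq_mul, mul_one, mul_zero, tr_zero n h σ tr hσ htr hbp, Om_zero, one_mul]
      push_cast
      ring
    · rw [if_neg hu0, hIu u hu hu0, mul_zero]
  rw [Finset.sum_congr rfl hmain, Finset.sum_ite_eq' (Teich n h) 0 (fun _ => (2^n : ℂ))]
  rw [if_pos (zero_mem_Teich n h)]

end Main
end GP

open Classical in
/-- `|Γ(r)| = 0` if `r ∈ 2T_n`, `r ≠ 0`; `|Γ(r)| = 2ⁿ` if `r = 0`; and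
`|Γ(r)| = √(2ⁿ)` otherwise.  Here `tr` is the trace map of `GR(4,n)`, i.e.
`tr(x) = ∑_{k<n} σ^k(x)` where `σ(a+2b) = a² + 2b²` is the Frobenius. -/
theorem gamma_abs (n : ℕ) (h : Polynomial (ZMod 4)) (hbp : IsBasicPrimitive n h)
    (σ : GR h → GR h)
    (hσ : ∀ a b : GR h, a ∈ Teich n h → b ∈ Teich n h →
      σ (a + 2 * b) = a ^ 2 + 2 * b ^ 2)
    (tr : GR h → ZMod 4)
    (htr : ∀ r : GR h,
      algebraMap (ZMod 4) (GR h) (tr r) = ∑ k ∈ Finset.range n, σ^[k] r)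
    (r : GR h) :
    ‖Gamma n h tr r‖ =
      if r = 0 then (2 ^ n : ℝ)
      else if ∃ t ∈ Teich n h, r = 2 * t then 0
      else Real.sqrt (2 ^ n) := by
  haveI : Fintype (GP.Sf h) :=
    Fintype.ofEquiv _ (AdjoinRoot.powerBasis (GP.hb_ne_zero n h hbp)).basis.equivFun.toEquiv.symm
  have hgam : Gamma n h tr r = ∑ x ∈ Teich n h, GP.Om (tr (r * x)) :=
    Finset.sum_congr rfl (fun x _ => GP.exp_eq_Om _)
  split_ifs with h0 h2
  · subst h0
    rw [hgam]
    have hterm : ∀ x ∈ Teich n h, GP.Om (tr (0 * x)) = 1 := by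
      intro x _
      rw [zero_mul, GP.tr_zero n h σ tr hσ htr hbp, GP.Om_zero]
    rw [Finset.sum_congr rfl hterm, Finset.sum_const, GP.card_Teich n h hbp,
      nsmul_eq_mul, mul_one]
    rw [show ((2^n : ℕ) : ℂ) = (2:ℂ)^n by push_cast; ring, norm_pow, Complex.norm_two]
  · obtain ⟨t, ht, rfl⟩ := h2
    rw [hgam, GP.gamma_two n h σ tr hbp hσ htr t ht
      (fun e => h0 (by rw [e, mul_zero])), norm_zero]
  · have hr : GP.pr h r ≠ 0 := by
      intro e
      obtain ⟨y, hy⟩ := GP.pr_eq_zero_exists h r e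
      exact h2 ⟨GP.L n h (GP.pr h y), GP.L_mem n h hbp _, by
        rw [hy, GP.two_mul_rep n h hbp y]⟩
    have key := GP.gamma_unit n h σ tr hbp hσ htr r hr
    rw [hgam]
    have hnsq : ((Complex.normSq (∑ x ∈ Teich n h, GP.Om (tr (r*x))) : ℝ) : ℂ)
        = ((2:ℂ)^n) := by
      rw [← Complex.mul_conj]
      exact key
    have hnsq' : Complex.normSq (∑ x ∈ Teich n h, GP.Om (tr (r*x))) = (2:ℝ)^n := by
      exact_mod_cast hnsq
    rw [Complex.norm_def, hnsq']
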